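/- Let d ≥ 1, let ρ : ℝ^d → ℝ be twice continuously differentiable with ρ(x) > 0 for all x and with finite Fisher information I(ρ) := ∫_{ℝ^d} ‖∇(log ∘ ρ)(x)‖² ρ(x) dx < ∞, and let h : ℝ^d → ℝ be twice continuously differentiable with compact support. Then there exists δ > 0 such that ρ + τh > 0 for all |τ| < δ, and the function τ ↦ I(ρ + τh) is differentiable at τ = 0 with derivative ∫_{ℝ^d} ( −2 Δ(log ∘ ρ)(x) − ‖∇(log ∘ ρ)(x)‖² ) h(x) dx. -/

import Mathlib

open MeasureTheory
open scoped RealInnerProductSpace BigOperators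

/-- Gradient of a scalar function on Euclidean space. -/
noncomputable def egrad {d : ℕ} (f : EuclideanSpace ℝ (Fin d) → ℝ)
    (x : EuclideanSpace ℝ (Fin d)) : EuclideanSpace ℝ (Fin d) :=
  gradient f x

/-- Laplacian `Δf = ∑ i, ∂²f/∂x_i²`. -/
noncomputable def elap {d : ℕ} (f : EuclideanSpace ℝ (Fin d) → ℝ)
    (x : EuclideanSpace ℝ (Fin d)) : ℝ :=
  ∑ i, fderiv ℝ (fun y => fderiv ℝ f y (EuclideanSpace.single i (1 : ℝ))) x
      (EuclideanSpace.single i (1 : ℝ))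

/-- Divergence `∇·V = ∑ i, ∂V_i/∂x_i` of a vector field. -/
noncomputable def ediv {d : ℕ} (V : EuclideanSpace ℝ (Fin d) → EuclideanSpace ℝ (Fin d))
    (x : EuclideanSpace ℝ (Fin d)) : ℝ :=
  ∑ i, fderiv ℝ (fun y => V y i) x (EuclideanSpace.single i (1 : ℝ))

section Aux

open Set

lemma aux_pi_div {n : ℕ} (W : (Fin (n+1) → ℝ) → (Fin (n+1) → ℝ)) (hW : ContDiff ℝ 1 W)
    (hsupp : HasCompactSupport W) :
    ∫ x, ∑ i, fderiv ℝ (fun y => W y i) x (Pi.single i 1) = 0 := by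
  obtain ⟨R, hR⟩ := hsupp.isCompact.isBounded.subset_closedBall 0
  set R' := max R 0 with hR'
  have hsub : tsupport W ⊆ Metric.closedBall 0 R' :=
    hR.trans (Metric.closedBall_subset_closedBall (le_max_left _ _))
  set a : Fin (n+1) → ℝ := fun _ => -(R'+1) with ha
  set b : Fin (n+1) → ℝ := fun _ => (R'+1) with hb
  have hR'0 : 0 ≤ R' := le_max_right R 0
  have hle : a ≤ b := fun i => by simp only [a, b]; nlinarith
  have hWi : ∀ i, ContDiff ℝ 1 (fun y => W y i) := fun i => (contDiff_pi.1 hW i)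
  have hdiffW : ∀ i, Differentiable ℝ (fun y => W y i) := fun i => (hWi i).differentiable one_ne_zero
  have hcont : Continuous fun x => ∑ i, fderiv ℝ (fun y => W y i) x (Pi.single i 1) := by
    apply continuous_finset_sum
    intro i _
    exact ((hWi i).continuous_fderiv one_ne_zero).clm_apply continuous_const
  have hzero : ∀ x ∉ tsupport W, ∀ i, fderiv ℝ (fun y => W y i) x = 0 := by
    intro x hx i
    have hev : (fun y => W y i) =ᶠ[nhds x] (fun _ => 0) := by
      filter_upwards [notMem_tsupport_iff_eventuallyEq.mp hx] with y hy
      simp [hy]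
    rw [hev.fderiv_eq, fderiv_fun_const]; rfl
  have key := integral_divergence_of_hasFDerivAt_off_countable' a b hle
      (fun i y => W y i) (fun i y => fderiv ℝ (fun z => W z i) y) ∅ countable_empty
      (fun i => (hdiffW i).continuous.continuousOn)
      (fun x _ i => ((hdiffW i) x).hasFDerivAt)
      (hcont.continuousOn.integrableOn_compact isCompact_Icc)
  have hface : ∀ (i : Fin (n+1)) (c : ℝ), |c| = R' + 1 →
      ∀ y : Fin n → ℝ, W (i.insertNth c y) i = 0 := by
    intro i c hc y
    have hnot : (i.insertNth c y : Fin (n+1) → ℝ) ∉ tsupport W := by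
      intro hmem
      have hn : ‖(i.insertNth c y : Fin (n+1) → ℝ)‖ ≤ R' := by
        simpa using mem_closedBall_iff_norm.mp (hsub hmem)
      have h1 : ‖(i.insertNth c y : Fin (n+1) → ℝ) i‖ ≤ ‖(i.insertNth c y : Fin (n+1) → ℝ)‖ :=
        norm_le_pi_norm (i.insertNth c y : Fin (n+1) → ℝ) i
      rw [Fin.insertNth_apply_same, Real.norm_eq_abs, hc] at h1
      linarith
    have : W (i.insertNth c y) = 0 := image_eq_zero_of_notMem_tsupport hnot
    simp [this]
  have hIccsub : tsupport W ⊆ Icc a b := by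
    intro x hx
    have hn : ‖x‖ ≤ R' := by simpa using mem_closedBall_iff_norm.mp (hsub hx)
    refine ⟨fun i => ?_, fun i => ?_⟩ <;>
    · have h1 := (norm_le_pi_norm x i).trans hn
      rw [Real.norm_eq_abs] at h1
      have h2 := abs_le.mp h1
      simp only [a, b]
      cases h2 with
      | intro l r => linarith
  have lhs_eq : (∫ x in Icc a b, ∑ i, fderiv ℝ (fun y => W y i) x (Pi.single i 1))
      = ∫ x, ∑ i, fderiv ℝ (fun y => W y i) x (Pi.single i 1) := by
    apply setIntegral_eq_integral_of_forall_compl_eq_zero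
    intro x hx
    have hxt : x ∉ tsupport W := fun hmem => hx (hIccsub hmem)
    simp [hzero x hxt]
  rw [lhs_eq] at key
  rw [key]
  apply Finset.sum_eq_zero
  intro i _
  have h1 : ∀ y ∈ Icc (a ∘ i.succAbove) (b ∘ i.succAbove), W (i.insertNth (b i) y) i = 0 :=
    fun y _ => hface i (b i) (by simp only [b]; rw [abs_of_nonneg] <;> linarith) y
  have h2 : ∀ y ∈ Icc (a ∘ i.succAbove) (b ∘ i.succAbove), W (i.insertNth (a i) y) i = 0 :=
    fun y _ => hface i (a i) (by simp only [a]; rw [abs_of_nonpos] <;> linarith) y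
  rw [setIntegral_congr_fun measurableSet_Icc h1, setIntegral_congr_fun measurableSet_Icc h2]
  simp

lemma aux_ediv_zero {d : ℕ} (hd : 1 ≤ d) (W : EuclideanSpace ℝ (Fin d) → EuclideanSpace ℝ (Fin d))
    (hW : ContDiff ℝ 1 W) (hsupp : HasCompactSupport W) :
    ∫ x, ediv W x = 0 := by
  obtain ⟨n, rfl⟩ : ∃ n, d = n + 1 := ⟨d - 1, by omega⟩
  set eL : EuclideanSpace ℝ (Fin (n+1)) ≃L[ℝ] (Fin (n+1) → ℝ) :=
    PiLp.continuousLinearEquiv 2 ℝ _ with heL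
  set W' : (Fin (n+1) → ℝ) → (Fin (n+1) → ℝ) := fun y => eL (W (eL.symm y)) with hW'
  have hW'c : ContDiff ℝ 1 W' := (eL.contDiff.comp hW).comp eL.symm.contDiff
  have hW's : HasCompactSupport W' := by
    have h1 : HasCompactSupport (fun x => eL (W x)) :=
      HasCompactSupport.comp_left hsupp (map_zero eL)
    exact h1.comp_homeomorph eL.symm.toHomeomorph
  have hpoint : ∀ x, ediv W x
      = ∑ i, fderiv ℝ (fun y => W' y i) (eL x) (Pi.single i 1) := by
    intro x
    apply Finset.sum_congr rfl
    intro i _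
    have hc := eL.symm.comp_right_fderiv (f := fun y => W y i) (x := eL x)
    rw [show (fun y => W' y i) = (fun y => W y i) ∘ eL.symm from rfl, hc, eL.symm_apply_apply]
    rfl
  have htrans : ∫ x, ediv W x
      = ∫ y : Fin (n+1) → ℝ, ∑ i, fderiv ℝ (fun z => W' z i) y (Pi.single i 1) := by
    rw [← (EuclideanSpace.volume_preserving_symm_measurableEquiv_toLp (Fin (n+1))).integral_comp
      (MeasurableEquiv.toLp 2 (Fin (n+1) → ℝ)).symm.measurableEmbedding]
    exact integral_congr_ae (Filter.Eventually.of_forall fun x => hpoint x)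
  rw [htrans]
  exact aux_pi_div W' hW'c hW's

lemma egrad_coord {d : ℕ} (f : EuclideanSpace ℝ (Fin d) → ℝ) (x : EuclideanSpace ℝ (Fin d))
    (i : Fin d) : egrad f x i = fderiv ℝ f x (EuclideanSpace.single i 1) := by
  have h1 : ⟪egrad f x, EuclideanSpace.single i (1:ℝ)⟫ = fderiv ℝ f x (EuclideanSpace.single i 1) :=
    InnerProductSpace.toDual_symm_apply
  rw [EuclideanSpace.inner_single_right] at h1
  simpa using h1

lemma egrad_inner {d : ℕ} (f : EuclideanSpace ℝ (Fin d) → ℝ) (x v : EuclideanSpace ℝ (Fin d)) :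
    ⟪egrad f x, v⟫ = fderiv ℝ f x v := InnerProductSpace.toDual_symm_apply

lemma aux_ibp {d : ℕ} (hd : 1 ≤ d) (V : EuclideanSpace ℝ (Fin d) → EuclideanSpace ℝ (Fin d))
    (hV : ContDiff ℝ 1 V) (h : EuclideanSpace ℝ (Fin d) → ℝ) (hh : ContDiff ℝ 1 h)
    (hsupp : HasCompactSupport h) :
    ∫ x, (⟪V x, egrad h x⟫ + ediv V x * h x) = 0 := by
  have hW : ContDiff ℝ 1 (fun y => h y • V y) := hh.smul hV
  have hWs : HasCompactSupport (fun y => h y • V y) := hsupp.smul_right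
  have key := aux_ediv_zero hd _ hW hWs
  have hpoint : ∀ x, ediv (fun y => h y • V y) x = ⟪V x, egrad h x⟫ + ediv V x * h x := by
    intro x
    unfold ediv
    have hVid : ∀ i, DifferentiableAt ℝ (fun y => V y i) x := fun i =>
      ((EuclideanSpace.proj i : EuclideanSpace ℝ (Fin d) →L[ℝ] ℝ).differentiable.comp
        (hV.differentiable one_ne_zero)) x
    have hhd : DifferentiableAt ℝ h x := (hh.differentiable one_ne_zero) x
    have hterm : ∀ i, fderiv ℝ (fun y => (h y • V y : EuclideanSpace ℝ (Fin d)) i) x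
          (EuclideanSpace.single i (1:ℝ))
        = h x * fderiv ℝ (fun y => V y i) x (EuclideanSpace.single i 1)
          + V x i * fderiv ℝ h x (EuclideanSpace.single i 1) := by
      intro i
      have : (fun y => (h y • V y : EuclideanSpace ℝ (Fin d)) i) = fun y => h y * V y i := rfl
      rw [this, fderiv_fun_mul hhd (hVid i)]
      simp [mul_comm]
    rw [Finset.sum_congr rfl (fun i _ => hterm i), Finset.sum_add_distrib]
    have hin : ⟪V x, egrad h x⟫ = ∑ i, V x i * fderiv ℝ h x (EuclideanSpace.single i 1) := by
      simp [PiLp.inner_apply, RCLike.inner_apply, egrad_coord, mul_comm]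
    rw [hin, Finset.sum_mul, add_comm]
    congr 1
    exact Finset.sum_congr rfl fun i _ => mul_comm _ _
  rw [← integral_congr_ae (Filter.Eventually.of_forall hpoint)] at *
  exact key

end Aux

set_option maxHeartbeats 2000000 in
/-- first variation of the Fisher information
`I(ρ) = ∫ ‖∇ log ρ‖² ρ` is `-2Δ(log ρ) - ‖∇ log ρ‖²`. -/
theorem fisher_information_first_variation {d : ℕ} (hd : 1 ≤ d)
    (ρ : EuclideanSpace ℝ (Fin d) → ℝ)
    (hρ : ContDiff ℝ 2 ρ) (hρpos : ∀ x, 0 < ρ x)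
    (hI : Integrable (fun x => ‖egrad (fun y => Real.log (ρ y)) x‖ ^ 2 * ρ x))
    (h : EuclideanSpace ℝ (Fin d) → ℝ)
    (hh : ContDiff ℝ 2 h) (hhsupp : HasCompactSupport h) :
    ∃ δ > 0,
      (∀ τ : ℝ, |τ| < δ → ∀ x, 0 < ρ x + τ * h x) ∧
      HasDerivAt
        (fun τ : ℝ =>
          ∫ x, ‖egrad (fun y => Real.log (ρ y + τ * h y)) x‖ ^ 2 * (ρ x + τ * h x))
        (∫ x, (-2 * elap (fun y => Real.log (ρ y)) x
                - ‖egrad (fun y => Real.log (ρ y)) x‖ ^ 2) * h x)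
        0 := by
  classical
  have hρd : Differentiable ℝ ρ := hρ.differentiable two_ne_zero
  have hhd : Differentiable ℝ h := hh.differentiable two_ne_zero
  have hρc : Continuous ρ := hρ.continuous
  have hhc : Continuous h := hh.continuous
  have hgρc : Continuous (egrad ρ) :=
    (InnerProductSpace.toDual ℝ _).symm.continuous.comp
      ((hρ.of_le one_le_two).continuous_fderiv one_ne_zero)
  have hghc : Continuous (egrad h) :=
    (InnerProductSpace.toDual ℝ _).symm.continuous.comp
      ((hh.of_le one_le_two).continuous_fderiv one_ne_zero)
  -- choice of δ
  set g : EuclideanSpace ℝ (Fin d) → ℝ := fun x => |h x| * (ρ x)⁻¹ with hg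
  have hgc : Continuous g := (hhc.abs).mul (hρc.inv₀ fun x => (hρpos x).ne')
  have hgsupp : HasCompactSupport g := by
    have h1 : HasCompactSupport (fun x => |h x|) := hhsupp.abs
    exact h1.mul_right
  obtain ⟨x₀, hx₀⟩ := hgc.exists_forall_ge_of_hasCompactSupport hgsupp
  set C := g x₀ with hC
  have hC0 : 0 ≤ C := by
    have h1 : 0 ≤ |h x₀| * (ρ x₀)⁻¹ := mul_nonneg (abs_nonneg _) (inv_nonneg.mpr (hρpos x₀).le)
    exact h1
  set δ : ℝ := (C + 1)⁻¹ with hδ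
  have hδpos : 0 < δ := inv_pos.mpr (by linarith)
  have hpos : ∀ τ : ℝ, |τ| < δ → ∀ x, 0 < ρ x + τ * h x := by
    intro τ hτ x
    have h1 : |h x| ≤ C * ρ x := by
      have h2 := hx₀ x
      rw [hg] at h2
      have h3 : (0:ℝ) < ρ x := hρpos x
      calc |h x| = |h x| * (ρ x)⁻¹ * ρ x := by field_simp
      _ ≤ C * ρ x := by
          apply mul_le_mul_of_nonneg_right h2 h3.le
    have h2 : -(|τ| * |h x|) ≤ τ * h x := by
      rw [← abs_mul]; exact neg_abs_le _
    have hτ' : |τ| * (C + 1) < 1 := by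
      have hCpos : (0:ℝ) < C + 1 := by positivity
      calc |τ| * (C + 1) < (C + 1)⁻¹ * (C + 1) := by
            exact mul_lt_mul_of_pos_right hτ hCpos
      _ = 1 := inv_mul_cancel₀ hCpos.ne'
    nlinarith [abs_nonneg τ, hρpos x, mul_le_mul_of_nonneg_left h1 (abs_nonneg τ)]
  refine ⟨δ, hδpos, hpos, ?_⟩
  -- chain rule for the gradient of the log
  have hgradlog : ∀ (τ : ℝ) (x), 0 < ρ x + τ * h x →
      egrad (fun y => Real.log (ρ y + τ * h y)) x
        = (ρ x + τ * h x)⁻¹ • (egrad ρ x + τ • egrad h x) := by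
    intro τ x hx
    have hsum : HasFDerivAt (fun y => ρ y + τ * h y)
        (fderiv ℝ ρ x + τ • fderiv ℝ h x) x :=
      ((hρd x).hasFDerivAt).add (((hhd x).hasFDerivAt).const_mul τ)
    have hlogd : HasFDerivAt (fun y => Real.log (ρ y + τ * h y))
        ((ρ x + τ * h x)⁻¹ • (fderiv ℝ ρ x + τ • fderiv ℝ h x)) x :=
      ((Real.hasDerivAt_log hx.ne').comp_hasFDerivAt x hsum :)
    show (InnerProductSpace.toDual ℝ _).symm
        (fderiv ℝ (fun y => Real.log (ρ y + τ * h y)) x) = _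
    rw [hlogd.fderiv]
    simp only [map_smulₛₗ, map_add, starRingEnd_apply, star_trivial]
    rfl
  -- the reformulated integrand
  set F : ℝ → EuclideanSpace ℝ (Fin d) → ℝ := fun τ x =>
    ‖egrad ρ x + τ • egrad h x‖ ^ 2 / (ρ x + τ * h x) with hF
  set Φ : ℝ → EuclideanSpace ℝ (Fin d) → ℝ := fun τ x =>
    (2 * ⟪egrad ρ x + τ • egrad h x, egrad h x⟫ * (ρ x + τ * h x)
      - ‖egrad ρ x + τ • egrad h x‖ ^ 2 * h x) / (ρ x + τ * h x) ^ 2 with hΦ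
  have hFeq : ∀ (τ : ℝ), |τ| < δ → ∀ x,
      ‖egrad (fun y => Real.log (ρ y + τ * h y)) x‖ ^ 2 * (ρ x + τ * h x) = F τ x := by
    intro τ hτ x
    have hp := hpos τ hτ x
    rw [hF]
    rw [hgradlog τ x hp, norm_smul, Real.norm_eq_abs, abs_inv, abs_of_pos hp]
    field_simp
  have hF'deriv : ∀ x, ∀ τ : ℝ, 0 < ρ x + τ * h x →
      HasDerivAt (fun σ => F σ x) (Φ τ x) τ := by
    intro x τ hp
    have hc : HasDerivAt (fun σ : ℝ => egrad ρ x + σ • egrad h x) (egrad h x) τ := by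
      simpa using ((hasDerivAt_id τ).smul_const (egrad h x)).const_add (egrad ρ x)
    have hN : HasDerivAt (fun σ : ℝ => ‖egrad ρ x + σ • egrad h x‖ ^ 2)
        (2 * ⟪egrad ρ x + τ • egrad h x, egrad h x⟫) τ := by
      have h1 := hc.inner ℝ hc
      have h2 : (fun σ : ℝ => ⟪egrad ρ x + σ • egrad h x, egrad ρ x + σ • egrad h x⟫)
          = fun σ : ℝ => ‖egrad ρ x + σ • egrad h x‖ ^ 2 := by
        funext σ; exact real_inner_self_eq_norm_sq _
      rw [h2] at h1
      refine h1.congr_deriv ?_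
      rw [real_inner_comm]; ring
    have hD : HasDerivAt (fun σ : ℝ => ρ x + σ * h x) (h x) τ := by
      simpa using ((hasDerivAt_id τ).mul_const (h x)).const_add (ρ x)
    exact hN.div hD hp.ne'
  -- vanishing outside the support of h
  set K := tsupport h with hK
  have hKc : IsCompact K := hhsupp
  have houtq : ∀ x ∉ K, h x = 0 := fun x hx => image_eq_zero_of_notMem_tsupport hx
  have houtb : ∀ x ∉ K, egrad h x = 0 := by
    intro x hx
    have hev : h =ᶠ[nhds x] (fun _ => 0) := notMem_tsupport_iff_eventuallyEq.mp hx
    show (InnerProductSpace.toDual ℝ _).symm (fderiv ℝ h x) = 0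
    rw [hev.fderiv_eq, fderiv_fun_const]
    simp
  have hΦout : ∀ (τ : ℝ) x, x ∉ K → Φ τ x = 0 := by
    intro τ x hx
    rw [hΦ]
    simp [houtq x hx, houtb x hx]
  -- continuity of Φ τ for good τ
  have hnumc : Continuous fun p : ℝ × EuclideanSpace ℝ (Fin d) =>
      2 * ⟪egrad ρ p.2 + p.1 • egrad h p.2, egrad h p.2⟫ * (ρ p.2 + p.1 * h p.2)
        - ‖egrad ρ p.2 + p.1 • egrad h p.2‖ ^ 2 * h p.2 := by
    have hvec : Continuous fun p : ℝ × EuclideanSpace ℝ (Fin d) =>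
        egrad ρ p.2 + p.1 • egrad h p.2 :=
      (hgρc.comp continuous_snd).add (continuous_fst.smul (hghc.comp continuous_snd))
    have hden : Continuous fun p : ℝ × EuclideanSpace ℝ (Fin d) => ρ p.2 + p.1 * h p.2 :=
      (hρc.comp continuous_snd).add (continuous_fst.mul (hhc.comp continuous_snd))
    exact ((continuous_const.mul (hvec.inner (hghc.comp continuous_snd))).mul hden).sub
      ((hvec.norm.pow 2).mul (hhc.comp continuous_snd))
  have hdenc : Continuous fun p : ℝ × EuclideanSpace ℝ (Fin d) => ρ p.2 + p.1 * h p.2 :=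
    (hρc.comp continuous_snd).add (continuous_fst.mul (hhc.comp continuous_snd))
  have hΦτcont : ∀ τ : ℝ, |τ| < δ → Continuous (Φ τ) := by
    intro τ hτ
    have hvec : Continuous fun x => egrad ρ x + τ • egrad h x :=
      hgρc.add (hghc.const_smul τ)
    have hden : Continuous fun x => ρ x + τ * h x := hρc.add (continuous_const.mul hhc)
    have hnum : Continuous fun x =>
        2 * ⟪egrad ρ x + τ • egrad h x, egrad h x⟫ * (ρ x + τ * h x)
          - ‖egrad ρ x + τ • egrad h x‖ ^ 2 * h x :=
      ((continuous_const.mul (hvec.inner hghc)).mul hden).sub ((hvec.norm.pow 2).mul hhc)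
    exact hnum.div (hden.pow 2) fun x => pow_ne_zero 2 (hpos τ hτ x).ne'
  have hFτcont : ∀ τ : ℝ, |τ| < δ → Continuous (F τ) := by
    intro τ hτ
    exact ((hgρc.add (hghc.const_smul τ)).norm.pow 2).div
      (hρc.add (continuous_const.mul hhc)) fun x => (hpos τ hτ x).ne'
  -- domination on Icc(-δ/2, δ/2) × K
  set S := Set.Icc (-(δ/2)) (δ/2) ×ˢ K with hS
  have hScomp : IsCompact S := isCompact_Icc.prod hKc
  have hSτ : ∀ p ∈ S, |p.1| < δ := by
    rintro ⟨τ, x⟩ ⟨hτ, hx⟩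
    have := abs_le.mpr ⟨hτ.1, hτ.2⟩
    linarith
  have hΦScont : ContinuousOn (fun p : ℝ × EuclideanSpace ℝ (Fin d) => Φ p.1 p.2) S := by
    rw [hΦ]
    apply ContinuousOn.div (hnumc.continuousOn) ((hdenc.pow 2).continuousOn)
    intro p hp
    exact pow_ne_zero 2 (hpos p.1 (hSτ p hp) p.2).ne'
  obtain ⟨D, hD⟩ := hScomp.exists_bound_of_continuousOn hΦScont
  set bound : EuclideanSpace ℝ (Fin d) → ℝ := K.indicator (fun _ => D) with hbound
  have hmemball : ∀ τ : ℝ, τ ∈ Metric.ball (0:ℝ) (δ/2) → |τ| < δ := by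
    intro τ hτ
    have : |τ| < δ/2 := by simpa [Real.dist_eq] using hτ
    linarith
  have h_bound : ∀ᵐ x, ∀ τ ∈ Metric.ball (0:ℝ) (δ/2), ‖Φ τ x‖ ≤ bound x := by
    apply Filter.Eventually.of_forall
    intro x τ hτ
    by_cases hx : x ∈ K
    · rw [hbound, Set.indicator_of_mem hx]
      have hτ2 : |τ| ≤ δ/2 := by
        have : |τ| < δ/2 := by simpa [Real.dist_eq] using hτ
        linarith
      exact hD (τ, x) ⟨abs_le.mp hτ2, hx⟩
    · rw [hbound, Set.indicator_of_notMem hx, hΦout τ x hx]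
      simp
  have hbound_int : Integrable bound := by
    rw [hbound, integrable_indicator_iff hKc.isClosed.measurableSet]
    exact integrableOn_const hKc.measure_lt_top.ne
  have hF_meas : ∀ᶠ τ in nhds (0:ℝ), AEStronglyMeasurable (F τ) volume := by
    filter_upwards [Metric.ball_mem_nhds (0:ℝ) hδpos] with τ hτ
    exact ((hFτcont τ (by simpa [Real.dist_eq] using hτ))).aestronglyMeasurable
  have hF_int : Integrable (F 0) := by
    apply hI.congr
    apply Filter.Eventually.of_forall
    intro x
    have h0 : (fun y => Real.log (ρ y + (0:ℝ) * h y)) = fun y => Real.log (ρ y) := by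
      funext y; norm_num
    have := hFeq 0 (by simpa using hδpos) x
    rw [h0] at this
    simpa using this
  have hF'_meas : AEStronglyMeasurable (Φ 0) volume :=
    (hΦτcont 0 (by simpa using hδpos)).aestronglyMeasurable
  have h_diff : ∀ᵐ x, ∀ τ ∈ Metric.ball (0:ℝ) (δ/2), HasDerivAt (fun σ => F σ x) (Φ τ x) τ :=
    Filter.Eventually.of_forall fun x τ hτ => hF'deriv x τ (hpos τ (hmemball τ hτ) x)
  obtain ⟨hint, hder⟩ := hasDerivAt_integral_of_dominated_loc_of_deriv_le
    (Metric.ball_mem_nhds (0:ℝ) (half_pos hδpos)) hF_meas hF_int hF'_meas h_bound hbound_int h_diff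
  -- transfer back to the original function of τ
  have hev : (fun τ : ℝ => ∫ x, ‖egrad (fun y => Real.log (ρ y + τ * h y)) x‖ ^ 2
        * (ρ x + τ * h x))
      =ᶠ[nhds (0:ℝ)] (fun τ => ∫ x, F τ x) := by
    filter_upwards [Metric.ball_mem_nhds (0:ℝ) hδpos] with τ hτ
    exact integral_congr_ae (Filter.Eventually.of_forall fun x =>
      hFeq τ (by simpa [Real.dist_eq] using hτ) x)
  have hder2 := hder.congr_of_eventuallyEq hev
  -- identify the derivative with the first variation
  set V : EuclideanSpace ℝ (Fin d) → EuclideanSpace ℝ (Fin d) :=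
    fun x => egrad (fun y => Real.log (ρ y)) x with hV
  have hVeq : ∀ x, V x = (ρ x)⁻¹ • egrad ρ x := by
    intro x
    have hlogd : HasFDerivAt (fun y => Real.log (ρ y)) ((ρ x)⁻¹ • fderiv ℝ ρ x) x :=
      ((Real.hasDerivAt_log (hρpos x).ne').comp_hasFDerivAt x (hρd x).hasFDerivAt :)
    show (InnerProductSpace.toDual ℝ _).symm (fderiv ℝ (fun y => Real.log (ρ y)) x) = _
    rw [hlogd.fderiv]
    simp only [map_smulₛₗ, starRingEnd_apply, star_trivial]
    rfl
  have hlogC2 : ContDiff ℝ 2 fun y => Real.log (ρ y) := hρ.log fun x => (hρpos x).ne'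
  have hVcd : ContDiff ℝ 1 V :=
    ((InnerProductSpace.toDual ℝ _).symm.toContinuousLinearEquiv.contDiff).comp
      (hlogC2.fderiv_right (by norm_num))
  have helap : elap (fun y => Real.log (ρ y)) = ediv V := by
    funext x
    unfold elap ediv
    apply Finset.sum_congr rfl
    intro i _
    have hfun : (fun y => fderiv ℝ (fun z => Real.log (ρ z)) y (EuclideanSpace.single i 1))
        = fun y => V y i := by
      funext y
      exact (egrad_coord (fun z => Real.log (ρ z)) y i).symm
    rw [hfun]
  have hibp := aux_ibp hd V hVcd h (hh.of_le one_le_two) hhsupp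
  have hΦ0 : ∀ x, Φ 0 x = (-2 * elap (fun y => Real.log (ρ y)) x
        - ‖egrad (fun y => Real.log (ρ y)) x‖ ^ 2) * h x
      + 2 * (⟪V x, egrad h x⟫ + ediv V x * h x) := by
    intro x
    have hp := hρpos x
    rw [helap, show egrad (fun y => Real.log (ρ y)) = V from rfl]
    rw [hVeq x]
    show (2 * ⟪egrad ρ x + (0:ℝ) • egrad h x, egrad h x⟫ * (ρ x + 0 * h x)
        - ‖egrad ρ x + (0:ℝ) • egrad h x‖ ^ 2 * h x) / (ρ x + 0 * h x) ^ 2 = _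
    rw [zero_smul, add_zero, zero_mul, add_zero]
    rw [norm_smul, real_inner_smul_left, Real.norm_eq_abs, abs_inv, abs_of_pos hp]
    field_simp
    ring
  have hedivVc : Continuous (ediv V) := by
    apply continuous_finset_sum
    intro i _
    have hVi : ContDiff ℝ 1 fun y => V y i :=
      ((EuclideanSpace.proj i : EuclideanSpace ℝ (Fin d) →L[ℝ] ℝ).contDiff).comp hVcd
    exact (hVi.continuous_fderiv one_ne_zero).clm_apply continuous_const
  have hIBPint : Integrable (fun x => ⟪V x, egrad h x⟫ + ediv V x * h x) := by
    apply Continuous.integrable_of_hasCompactSupport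
    · exact ((hVcd.continuous).inner hghc).add (hedivVc.mul hhc)
    · apply HasCompactSupport.intro hKc
      intro x hx
      simp [houtb x hx, houtq x hx]
  have hTint : Integrable (fun x => (-2 * elap (fun y => Real.log (ρ y)) x
      - ‖egrad (fun y => Real.log (ρ y)) x‖ ^ 2) * h x) := by
    apply Continuous.integrable_of_hasCompactSupport
    · apply Continuous.mul _ hhc
      apply Continuous.sub
      · rw [helap]
        exact continuous_const.mul hedivVc
      · exact ((hVcd.continuous).norm.pow 2)
    · apply HasCompactSupport.intro hKc
      intro x hx
      simp [houtq x hx]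
  have hfinal : (∫ x, Φ 0 x) = ∫ x, (-2 * elap (fun y => Real.log (ρ y)) x
      - ‖egrad (fun y => Real.log (ρ y)) x‖ ^ 2) * h x := by
    rw [integral_congr_ae (Filter.Eventually.of_forall hΦ0),
      integral_add hTint (hIBPint.const_mul 2)]
    have h2 : (∫ a, 2 * (⟪V a, egrad h a⟫ + ediv V a * h a))
        = 2 * ∫ a, (⟪V a, egrad h a⟫ + ediv V a * h a) := integral_const_mul _ _
    rw [h2, hibp]
    ring
  rw [hfinal] at hder2
  exact hder2
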